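/- Let G be a digraph over alphabet [q] with ordered values. If there exists a non-decreasing coding function f : [q]^n → [q]^n with G(f) ⊆ G having q^{k(G)} fixed points (where k(G) is the minimum feedback vertex set size), then G contains k(G) vertex-disjoint directed cycles. -/
import Mathlib

/-- Arc `(u,i)` of the interaction graph of a coding function `f`. -/
def arcCF {V A : Type*} [DecidableEq V] (f : (V → A) → V → A) (u i : V) : Prop :=
  ∃ (x : V → A) (a : A), f (Function.update x u a) i ≠ f x i

/-- `I` is an acyclic set of `G`. -/
def AcyclicIn {V : Type*} (G : V → V → Prop) (I : Set V) : Prop :=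
  ∀ a ∈ I, ¬ ∃ l : List V, (∀ i ∈ l, i ∈ I) ∧ List.Chain G a (l ++ [a])

/-- hybrid influence lemma -/
theorem influence {V A : Type*} [Fintype V] [DecidableEq V] [DecidableEq A]
    (f : (V → A) → V → A) (w : V) :
    ∀ (α β : V → A), f α w ≠ f β w → ∃ u, α u ≠ β u ∧ arcCF f u w := by
  suffices h : ∀ (n : ℕ) (α β : V → A),
      (Finset.univ.filter (fun u => α u ≠ β u)).card ≤ n →
      f α w ≠ f β w → ∃ u, α u ≠ β u ∧ arcCF f u w by
    intro α β hne
    exact h _ α β le_rfl hne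
  intro n
  induction n with
  | zero =>
    intro α β hc hne
    exfalso
    apply hne
    have hab : α = β := by
      funext u
      by_contra hu
      have hmem : u ∈ Finset.univ.filter (fun u => α u ≠ β u) :=
        Finset.mem_filter.mpr ⟨Finset.mem_univ _, hu⟩
      have := Finset.card_pos.mpr ⟨u, hmem⟩
      omega
    rw [hab]
  | succ n ih =>
    intro α β hc hne
    by_cases hempty : (Finset.univ.filter (fun u => α u ≠ β u)) = ∅
    · exfalso
      apply hne
      have hab : α = β := by
        funext u
        by_contra hu
        have hmem : u ∈ (∅ : Finset V) :=
          hempty ▸ (Finset.mem_filter.mpr ⟨Finset.mem_univ _, hu⟩)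
        simp at hmem
      rw [hab]
    · obtain ⟨u, hu⟩ := Finset.nonempty_of_ne_empty hempty
      have hau : α u ≠ β u := (Finset.mem_filter.mp hu).2
      by_cases hcase : f (Function.update β u (α u)) w = f β w
      · have hsub : Finset.univ.filter (fun x => α x ≠ Function.update β u (α u) x)
            ⊆ (Finset.univ.filter (fun x => α x ≠ β x)).erase u := by
          intro x hx
          have hx2 := (Finset.mem_filter.mp hx).2
          rw [Finset.mem_erase, Finset.mem_filter]
          by_cases hxu : x = u
          · exfalso
            apply hx2
            rw [hxu, Function.update_self]
          · rw [Function.update_of_ne hxu] at hx2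
            exact ⟨hxu, Finset.mem_univ _, hx2⟩
        have hcard' : (Finset.univ.filter
            (fun x => α x ≠ Function.update β u (α u) x)).card ≤ n := by
          have h1 := Finset.card_le_card hsub
          have h2 := Finset.card_erase_of_mem hu
          omega
        have hne' : f α w ≠ f (Function.update β u (α u)) w := by
          rw [hcase]; exact hne
        obtain ⟨u', hu', harc⟩ := ih α _ hcard' hne'
        refine ⟨u', ?_, harc⟩
        by_cases h' : u' = u
        · exfalso
          apply hu'
          rw [h', Function.update_self]
        · rw [Function.update_of_ne h'] at hu'
          exact hu'
      · exact ⟨u, hau, β, α u, hcase⟩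

/-- descending walk list -/
def wl {α : Type*} (c : ℕ → α) : ℕ → ℕ → List α
  | 0, _ => []
  | d+1, s => c (s + d) :: wl c d s

theorem wl_chain {α : Type*} (G : α → α → Prop) (c : ℕ → α)
    (h : ∀ i, G (c (i+1)) (c i)) :
    ∀ d s, List.Chain G (c (s + d)) (wl c d s) := by
  intro d
  induction d with
  | zero => intro s; exact List.Chain.nil
  | succ d ih => intro s; exact List.Chain.cons (h (s + d)) (ih s)

theorem wl_split {α : Type*} (c : ℕ → α) :
    ∀ d s, wl c (d+1) s = wl c d (s+1) ++ [c s] := by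
  intro d
  induction d with
  | zero => intro s; rfl
  | succ d ih =>
    intro s
    show c (s + (d+1)) :: wl c (d+1) s = (c ((s+1) + d) :: wl c d (s+1)) ++ [c s]
    rw [ih s]
    have hidx : s + (d+1) = (s+1) + d := by omega
    rw [hidx]
    rfl

theorem wl_mem {α : Type*} (c : ℕ → α) :
    ∀ d s x, x ∈ wl c d s → ∃ i, s ≤ i ∧ i < s + d ∧ x = c i := by
  intro d
  induction d with
  | zero => intro s x hx; simp [wl] at hx
  | succ d ih =>
    intro s x hx
    simp only [wl] at hx
    rcases List.mem_cons.mp hx with h | h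
    · exact ⟨s + d, by omega, by omega, h⟩
    · obtain ⟨i, h1, h2, h3⟩ := ih s x h
      exact ⟨i, h1, by omega, h3⟩

theorem wl_nodup {α : Type*} (c : ℕ → α) :
    ∀ d s, (∀ i j, s ≤ i → i < j → j < s + d → c i ≠ c j) → (wl c d s).Nodup := by
  intro d
  induction d with
  | zero => intro s _; exact List.nodup_nil
  | succ d ih =>
    intro s hinj
    simp only [wl]
    refine List.nodup_cons.mpr ⟨?_, ih s (fun i j h1 h2 h3 => hinj i j h1 h2 (by omega))⟩
    intro hmem
    obtain ⟨i, h1, h2, h3⟩ := wl_mem c d s _ hmem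
    exact hinj i (s+d) h1 h2 (by omega) h3.symm

/-- a finite nonempty set closed under taking in-neighbours contains a simple cycle -/
theorem exists_cycle_of_closed {V : Type*} [Fintype V] (G : V → V → Prop) (K : Finset V)
    (hne : K.Nonempty) (hcl : ∀ w ∈ K, ∃ u, u ∈ K ∧ G u w) :
    ∃ a l, a ∈ K ∧ (∀ x ∈ l, x ∈ K) ∧ List.Chain G a (l ++ [a]) ∧ (a :: l).Nodup := by
  classical
  have hch : ∀ w : V, ∃ u, w ∈ K → u ∈ K ∧ G u w := by
    intro w
    by_cases h : w ∈ K
    · obtain ⟨u, hu1, hu2⟩ := hcl w h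
      exact ⟨u, fun _ => ⟨hu1, hu2⟩⟩
    · exact ⟨w, fun h' => absurd h' h⟩
  choose pk hpk using hch
  obtain ⟨s0, hs0⟩ := hne
  have hcm : ∀ n, pk^[n] s0 ∈ K := by
    intro n
    induction n with
    | zero => exact hs0
    | succ n ih =>
      rw [Function.iterate_succ_apply']
      exact (hpk _ ih).1
  have harc : ∀ i, G (pk^[i+1] s0) (pk^[i] s0) := by
    intro i
    rw [Function.iterate_succ_apply']
    exact (hpk _ (hcm i)).2
  have hex : ∃ m, ∃ n, n < m ∧ pk^[n] s0 = pk^[m] s0 := by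
    obtain ⟨i, j, hij, heq⟩ := Fintype.exists_ne_map_eq_of_card_lt
      (fun i : Fin (Fintype.card V + 1) => pk^[i.val] s0) (by simp)
    have hvne : i.val ≠ j.val := fun h => hij (Fin.ext h)
    rcases lt_or_gt_of_ne hvne with h | h
    · exact ⟨j.val, i.val, h, heq⟩
    · exact ⟨i.val, j.val, h, heq.symm⟩
  obtain ⟨n, hnM, hceq⟩ := Nat.find_spec hex
  set M := Nat.find hex with hMdef
  have hkey : ∀ i j, i < j → j < M → pk^[i] s0 ≠ pk^[j] s0 := by
    intro i j h1 h2 heq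
    exact Nat.find_min hex h2 ⟨i, h1, heq⟩
  have hchain0 : List.Chain G (pk^[n + (M - n)] s0)
      (wl (fun i => pk^[i] s0) (M - n) n) :=
    wl_chain G (fun i => pk^[i] s0) harc (M - n) n
  have hnM' : n + (M - n) = M := by omega
  rw [hnM'] at hchain0
  have hM2 : M - n = (M - (n+1)) + 1 := by omega
  rw [hM2, wl_split] at hchain0
  rw [hceq] at hchain0
  refine ⟨pk^[M] s0, wl (fun i => pk^[i] s0) (M - (n+1)) (n+1), hcm M, ?_, hchain0, ?_⟩
  · intro x hx
    obtain ⟨i, _, _, hxe⟩ := wl_mem _ _ _ x hx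
    rw [hxe]
    exact hcm i
  · refine List.nodup_cons.mpr ⟨?_, wl_nodup _ _ _
      (fun i j h1 h2 h3 => hkey i j h2 (by omega))⟩
    intro hmem
    obtain ⟨i, h1, h2, h3⟩ := wl_mem _ _ _ _ hmem
    exact hkey n i (by omega) (by omega) (hceq.trans h3)

/-- Let `S` be a minimum feedback vertex set of `G` (so `|S| = k(G)`).  If there is a
non-decreasing (monotone) coding function `f : [q]^n → [q]^n` (`q ≥ 2`) with
`G(f) ⊆ G` having `q^{k(G)}` fixed points, then `G` contains `k(G)` vertex-disjoint
directed cycles. -/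
theorem stmt17 {V : Type*} [Fintype V] [DecidableEq V] (G : V → V → Prop)
    (q : ℕ) (hq : 2 ≤ q) (S : Finset V)
    (hS : AcyclicIn G ((S : Set V))ᶜ)
    (hmin : ∀ S' : Finset V, AcyclicIn G ((S' : Set V))ᶜ → S.card ≤ S'.card)
    (hf : ∃ f : (V → Fin q) → V → Fin q, Monotone f ∧
      (∀ u i, arcCF f u i → G u i) ∧
      Set.ncard {x | f x = x} = q ^ S.card) :
    ∃ (a : Fin S.card → V) (l : Fin S.card → List V),
      (∀ j, List.Chain G (a j) (l j ++ [a j])) ∧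
      (∀ j, (a j :: l j).Nodup) ∧
      (∀ j j', j ≠ j' → ∀ v, v ∈ a j :: l j → v ∉ a j' :: l j') := by
  classical
  obtain ⟨f, hmono, harcs, hcard⟩ := hf
  -- Step A : comparison lemma for fixed points
  have step_le : ∀ x y : V → Fin q, f x = x → f y = y →
      (∀ s ∈ S, x s ≤ y s) → ∀ w, x w ≤ y w := by
    intro x y hx hy hxy
    by_contra hcon
    push_neg at hcon
    obtain ⟨w0, hw0⟩ := hcon
    have hBcl : ∀ w ∈ Finset.univ.filter (fun w => y w < x w),
        ∃ u, u ∈ Finset.univ.filter (fun w => y w < x w) ∧ G u w := by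
      intro w hw
      have hww := (Finset.mem_filter.mp hw).2
      have hle2 : (fun v' => min (x v') (y v')) ≤ y := fun v' => min_le_right _ _
      have h1 : f (fun v' => min (x v') (y v')) w ≤ y w := by
        have h := hmono hle2 w
        rwa [hy] at h
      have h2 : f (fun v' => min (x v') (y v')) w ≠ f x w := by
        intro heq
        rw [heq, hx] at h1
        exact absurd h1 (not_le.mpr hww)
      obtain ⟨u, hu, harcu⟩ := influence f w _ x h2
      refine ⟨u, ?_, harcs u w harcu⟩
      rw [Finset.mem_filter]
      refine ⟨Finset.mem_univ u, ?_⟩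
      by_contra hnlt
      push_neg at hnlt
      exact hu (min_eq_left hnlt)
    have hBne : (Finset.univ.filter (fun w => y w < x w)).Nonempty :=
      ⟨w0, Finset.mem_filter.mpr ⟨Finset.mem_univ _, hw0⟩⟩
    obtain ⟨a, l, haB, hlB, hchain, _⟩ := exists_cycle_of_closed G _ hBne hBcl
    have hnotS : ∀ z ∈ Finset.univ.filter (fun w => y w < x w), z ∈ ((S : Set V))ᶜ := by
      intro z hz
      have hz2 := (Finset.mem_filter.mp hz).2
      simp only [Set.mem_compl_iff, Finset.mem_coe]
      intro hzS
      exact absurd (hxy z hzS) (not_le.mpr hz2)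
    exact hS a (hnotS a haB) ⟨l, fun i hi => hnotS i (hlB i hi), hchain⟩
  -- Step B : every prescription on S extends to a fixed point
  haveI : Fintype ↥{x : V → Fin q | f x = x} := Fintype.ofFinite _
  have hcF : Fintype.card ↥{x : V → Fin q | f x = x} = q ^ S.card := by
    rw [← Nat.card_eq_fintype_card, Nat.card_coe_set_eq]
    exact hcard
  have hcT : Fintype.card ({a // a ∈ S} → Fin q) = q ^ S.card := by
    rw [Fintype.card_fun]
    simp
  have hbij : Function.Bijective
      (fun (x : ↥{x : V → Fin q | f x = x}) (s : {a // a ∈ S}) => (x : V → Fin q) s.1) := by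
    rw [Fintype.bijective_iff_injective_and_card]
    constructor
    · intro x y hxy
      have key : ∀ s ∈ S, (x : V → Fin q) s = (y : V → Fin q) s :=
        fun s hs => congrFun hxy ⟨s, hs⟩
      apply Subtype.ext
      funext w
      exact le_antisymm
        (step_le x y x.2 y.2 (fun s hs => le_of_eq (key s hs)) w)
        (step_le y x y.2 x.2 (fun s hs => le_of_eq (key s hs).symm) w)
    · rw [hcF, hcT]
  have hsurj : ∀ σ : V → Fin q, ∃ x : V → Fin q, f x = x ∧ ∀ s ∈ S, x s = σ s := by
    intro σ
    obtain ⟨x, hx⟩ := hbij.2 (fun s => σ s.1)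
    exact ⟨x.1, x.2, fun s hs => congrFun hx ⟨s, hs⟩⟩
  -- enumeration of S
  set e : Fin S.card → {a // a ∈ S} := fun j => S.equivFin.symm j with hedef
  set v : Fin S.card → V := fun j => (e j).1 with hvdef
  have hvS : ∀ j, v j ∈ S := fun j => (e j).2
  have hvinj : Function.Injective v := by
    intro j j' h
    exact S.equivFin.symm.injective (Subtype.ext h)
  -- special values
  have h0q : 0 < q := by omega
  have h1q : 1 < q := by omega
  have hq1q : q - 1 < q := by omega
  -- fixed points with prescribed restrictions
  have hrp : ∀ j : Fin S.card, ∃ r : V → Fin q, f r = r ∧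
      ∀ s ∈ S, r s = (if s = v j then (⟨1, h1q⟩ : Fin q) else ⟨0, h0q⟩) :=
    fun j => hsurj _
  choose r hrfix hrval using hrp
  have hpp : ∀ j : Fin S.card, ∃ p : V → Fin q, f p = p ∧
      ∀ s ∈ S, p s = (if s = v j then (⟨0, h0q⟩ : Fin q) else ⟨q - 1, hq1q⟩) :=
    fun j => hsurj _
  choose p hpfix hpval using hpp
  -- the sets Σ_j
  set K : Fin S.card → Finset V :=
    fun j => Finset.univ.filter (fun w => p j w < r j w) with hKdef
  have hKmem : ∀ j w, w ∈ K j ↔ p j w < r j w := by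
    intro j w
    rw [hKdef]
    simp
  have hKne : ∀ j, (K j).Nonempty := by
    intro j
    refine ⟨v j, (hKmem j (v j)).mpr ?_⟩
    rw [hpval j (v j) (hvS j), hrval j (v j) (hvS j), if_pos rfl, if_pos rfl]
    exact Fin.mk_lt_mk.mpr (by omega)
  have hKcl : ∀ j, ∀ w ∈ K j, ∃ u, u ∈ K j ∧ G u w := by
    intro j w hw
    have hww := (hKmem j w).mp hw
    have hle1 : (fun v' => min (p j v') (r j v')) ≤ p j := fun v' => min_le_left _ _
    have h1 : f (fun v' => min (p j v') (r j v')) w ≤ p j w := by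
      have h := hmono hle1 w
      rwa [hpfix j] at h
    have h2 : f (fun v' => min (p j v') (r j v')) w ≠ f (r j) w := by
      intro heq
      rw [heq, hrfix j] at h1
      exact absurd h1 (not_le.mpr hww)
    obtain ⟨u, hu, harcu⟩ := influence f w _ (r j) h2
    refine ⟨u, (hKmem j u).mpr ?_, harcs u w harcu⟩
    by_contra hnlt
    push_neg at hnlt
    exact hu (min_eq_right hnlt)
  have hcyc : ∀ j, ∃ a l, a ∈ K j ∧ (∀ x ∈ l, x ∈ K j) ∧
      List.Chain G a (l ++ [a]) ∧ (a :: l).Nodup :=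
    fun j => exists_cycle_of_closed G (K j) (hKne j) (hKcl j)
  choose a l haK hlK hchain hnodup using hcyc
  -- disjointness
  have hcross : ∀ j j' : Fin S.card, j ≠ j' → ∀ w, r j w ≤ p j' w := by
    intro j j' hjj' w
    have hvne : v j ≠ v j' := fun h => hjj' (hvinj h)
    apply step_le (r j) (p j') (hrfix j) (hpfix j')
    intro s hs
    rw [hrval j s hs, hpval j' s hs]
    by_cases h1s : s = v j
    · have h2s : s ≠ v j' := by rw [h1s]; exact hvne
      rw [if_pos h1s, if_neg h2s]
      exact Fin.mk_le_mk.mpr (by omega)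
    · rw [if_neg h1s]
      by_cases h2s : s = v j'
      · rw [if_pos h2s]
      · rw [if_neg h2s]
        exact Fin.mk_le_mk.mpr (by omega)
  have hKdisj : ∀ j j', j ≠ j' → ∀ x, x ∈ K j → x ∉ K j' := by
    intro j j' hjj' x hxj hxj'
    have h1 : p j x < r j x := (hKmem j x).mp hxj
    have h2 : p j' x < r j' x := (hKmem j' x).mp hxj'
    have h3 := hcross j j' hjj' x
    have h4 := hcross j' j (Ne.symm hjj') x
    exact lt_irrefl (p j x) (((h1.trans_le h3).trans h2).trans_le h4)
  refine ⟨a, l, hchain, hnodup, ?_⟩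
  intro j j' hjj' x hx hx'
  have hxK : x ∈ K j := by
    rcases List.mem_cons.mp hx with h | h
    · rw [h]; exact haK j
    · exact hlK j x h
  have hxK' : x ∈ K j' := by
    rcases List.mem_cons.mp hx' with h | h
    · rw [h]; exact haK j'
    · exact hlK j' x h
  exact hKdisj j j' hjj' x hxK hxK'
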